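/- Let a = (a₁,a₂) ∈ ℤ², b ∈ ℕ with gcd(a₁,a₂,b) = 1, and β = (β₁,β₂) ∈ ℝ². Then for all 0 < ε < 1, the number of integers h with 0 ≤ h ≤ b−1 such that ‖h·(a/b) + β‖ < ε (where ‖·‖ is the max-norm distance to the nearest integer vector in ℝ²) is at most 8εb + 1. -/

import Mathlib

/-- Maximum-norm distance from a point of `ℝ × ℝ` to the nearest integer vector. -/
noncomputable def nint2 (x : ℝ × ℝ) : ℝ := max |x.1 - round x.1| |x.2 - round x.2|

private lemma count1 (a : ℤ) (b : ℕ) (hb : 0 < b) (β ε : ℝ) (hε : 0 < ε) :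
    ((((Finset.range b).filter (fun h : ℕ =>
        |(h : ℝ) * ((a : ℝ) / b) + β - round ((h : ℝ) * ((a : ℝ) / b) + β)| < ε)).card : ℝ)
      ≤ 2 * ε * b + Int.gcd a b) := by
  classical
  have hbR : (0:ℝ) < b := by exact_mod_cast hb
  set g : ℕ := Int.gcd a b with hgdef
  have hgpos : 0 < g := Int.gcd_pos_iff.mpr (Or.inr (by exact_mod_cast hb.ne'))
  have hgR : (0:ℝ) < g := by exact_mod_cast hgpos
  have hgb : (g:ℤ) ∣ (b:ℤ) := Int.gcd_dvd_right _ _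
  have hga : (g:ℤ) ∣ a := Int.gcd_dvd_left _ _
  set F := (Finset.range b).filter (fun h : ℕ =>
      |(h : ℝ) * ((a : ℝ) / b) + β - round ((h : ℝ) * ((a : ℝ) / b) + β)| < ε) with hF
  set t : ℕ → ℤ := fun h => (h:ℤ) * a - (b:ℤ) * round ((h : ℝ) * ((a : ℝ) / b) + β) with htdef
  have ht_dvd : ∀ h, (g:ℤ) ∣ t h := fun h =>
    dvd_sub (Dvd.dvd.mul_left hga _) (Dvd.dvd.mul_right hgb _)
  set u : ℕ → ℤ := fun h => t h / (g:ℤ) with hudef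
  have htu : ∀ h, t h = (g:ℤ) * u h := fun h => (Int.mul_ediv_cancel' (ht_dvd h)).symm
  have ht_mem : ∀ h ∈ F, |(t h : ℝ) + β * b| < ε * b := by
    intro h hh
    rw [hF, Finset.mem_filter] at hh
    have hcond := hh.2
    have he : (t h : ℝ) + β * b
        = b * ((h : ℝ) * ((a : ℝ) / b) + β - round ((h : ℝ) * ((a : ℝ) / b) + β)) := by
      set R : ℤ := round ((h : ℝ) * ((a : ℝ) / b) + β) with hRdef
      show ((((h:ℤ) * a - (b:ℤ) * R : ℤ) : ℝ)) + β * b = b * ((h : ℝ) * ((a : ℝ) / b) + β - R)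
      push_cast
      field_simp
      ring
    rw [he, abs_mul, abs_of_pos hbR]
    have := mul_lt_mul_of_pos_left hcond hbR
    linarith
  set lo : ℤ := ⌈(-(β*b) - ε*b)/(g:ℝ)⌉ with hlo
  set hi : ℤ := ⌊(-(β*b) + ε*b)/(g:ℝ)⌋ with hhi
  have himage : F.image u ⊆ Finset.Icc lo hi := by
    intro v hv
    rw [Finset.mem_image] at hv
    obtain ⟨h, hh, rfl⟩ := hv
    have h1' := abs_lt.mp (ht_mem h hh)
    have htr : ((t h : ℤ):ℝ) = (g:ℝ) * ((u h : ℤ):ℝ) := by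
      rw [htu h]; push_cast; ring
    rw [Finset.mem_Icc]
    constructor
    · apply Int.ceil_le.mpr
      rw [div_le_iff₀ hgR]
      nlinarith [h1'.1]
    · apply Int.le_floor.mpr
      rw [le_div_iff₀ hgR]
      nlinarith [h1'.2]
  set n : ℕ := b / g with hndef
  have hgdvdb : g ∣ b := Int.natCast_dvd_natCast.mp hgb
  have hbgn : b = g * n := (Nat.mul_div_cancel' hgdvdb).symm
  have hnpos : 0 < n := Nat.div_pos (Nat.le_of_dvd hb hgdvdb) hgpos
  have hfiber : ∀ v ∈ F.image u, (F.filter fun h => u h = v).card ≤ g := by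
    intro v _
    have : (F.filter fun h => u h = v).card ≤ (Finset.range g).card := by
      apply Finset.card_le_card_of_injOn (fun h => h / n)
      · intro h hh
        rw [Finset.mem_coe, Finset.mem_filter] at hh
        have hhb : h < b := Finset.mem_range.mp (Finset.mem_filter.mp hh.1).1
        rw [Finset.mem_coe, Finset.mem_range]
        exact (Nat.div_lt_iff_lt_mul hnpos).mpr (by rw [← hbgn]; exact hhb)
      · intro h₁ hh₁ h₂ hh₂ hdiv
        simp only [Finset.coe_filter, Set.mem_setOf_eq] at hh₁ hh₂
        have ht12 : t h₁ = t h₂ := by rw [htu h₁, htu h₂, hh₁.2, hh₂.2]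
        have hba : (b:ℤ) ∣ ((h₁:ℤ) - h₂) * a := by
          refine ⟨round ((h₁ : ℝ) * ((a : ℝ) / b) + β) - round ((h₂ : ℝ) * ((a : ℝ) / b) + β), ?_⟩
          have heq : (h₁:ℤ) * a - (b:ℤ) * round ((h₁ : ℝ) * ((a : ℝ) / b) + β)
              = (h₂:ℤ) * a - (b:ℤ) * round ((h₂ : ℝ) * ((a : ℝ) / b) + β) := ht12
          linear_combination heq
        obtain ⟨a', ha'⟩ := hga
        have hbZ : (b:ℤ) = (g:ℤ) * (n:ℤ) := by exact_mod_cast hbgn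
        have hg0 : (g:ℤ) ≠ 0 := by exact_mod_cast hgpos.ne'
        have hdvd : (n:ℤ) ∣ ((h₁:ℤ) - h₂) * a' := by
          rw [ha', hbZ] at hba
          obtain ⟨k, hk⟩ := hba
          refine ⟨k, mul_left_cancel₀ hg0 ?_⟩
          linear_combination hk
        have hcop : IsCoprime ((n:ℤ)) a' := by
          have hg1 : Int.gcd (a / (g:ℤ)) ((b:ℤ) / (g:ℤ)) = 1 :=
            Int.gcd_div_gcd_div_gcd (by exact_mod_cast hgpos)
          have ha'' : a / (g:ℤ) = a' := by rw [ha']; exact Int.mul_ediv_cancel_left _ hg0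
          have hn'' : (b:ℤ) / (g:ℤ) = (n:ℤ) := by rw [hbZ]; exact Int.mul_ediv_cancel_left _ hg0
          rw [ha'', hn''] at hg1
          exact (Int.isCoprime_iff_gcd_eq_one.mpr hg1).symm
        have hnd : (n:ℤ) ∣ (h₁:ℤ) - h₂ := hcop.dvd_of_dvd_mul_right hdvd
        have hmod : (h₂:ℤ) % n = (h₁:ℤ) % n := Int.modEq_iff_dvd.mpr hnd
        have hmodn : h₂ % n = h₁ % n := by exact_mod_cast hmod
        have hdiv' : h₁ / n = h₂ / n := hdiv
        have e := (Nat.div_add_mod h₁ n).symm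
        rw [hdiv', ← hmodn] at e
        rw [Nat.div_add_mod] at e
        exact e
    simpa using this
  have h1 : F.card ≤ g * (F.image u).card := Finset.card_le_mul_card_image F g hfiber
  have h2 : (F.image u).card ≤ (Finset.Icc lo hi).card := Finset.card_le_card himage
  have h3 : (((Finset.Icc lo hi).card : ℕ) : ℝ) ≤ 2*ε*b/g + 1 := by
    rw [Int.card_Icc]
    rcases le_or_gt (hi + 1 - lo) 0 with hc | hc
    · rw [Int.toNat_of_nonpos hc]
      have : (0:ℝ) ≤ 2*ε*b/g := by positivity
      simp
      linarith
    · have hcast : (((hi + 1 - lo).toNat : ℕ) : ℝ) = ((hi:ℝ) + 1 - lo) := by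
        rw [← Int.cast_natCast, Int.toNat_of_nonneg hc.le]; push_cast; ring
      rw [hcast]
      have hfl : (hi:ℝ) ≤ (-(β*b) + ε*b)/(g:ℝ) := Int.floor_le _
      have hcl : (-(β*b) - ε*b)/(g:ℝ) ≤ (lo:ℝ) := Int.le_ceil _
      have hdiff : (-(β*b) + ε*b)/(g:ℝ) - (-(β*b) - ε*b)/(g:ℝ) = 2*ε*b/g := by
        field_simp <;> ring
      linarith
  have hchain : (F.card : ℝ) ≤ (g:ℝ) * (2*ε*b/g + 1) := by
    have hc : (F.card : ℝ) ≤ (g:ℝ) * (((Finset.Icc lo hi).card : ℕ) : ℝ) := by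
      have : F.card ≤ g * (Finset.Icc lo hi).card := le_trans h1 (Nat.mul_le_mul_left g h2)
      exact_mod_cast this
    have := mul_le_mul_of_nonneg_left h3 hgR.le
    linarith
  have : (g:ℝ) * (2*ε*b/g + 1) = 2*ε*b + g := by field_simp <;> ring
  rw [this] at hchain
  exact hchain

private lemma coord_dvd (a : ℤ) (b : ℕ) (hb : 0 < b) (βc ε : ℝ) (hε : 0 < ε)
    (hg : 2 * ε * b ≤ Int.gcd a b) (h h' : ℕ)
    (H : |(h : ℝ) * ((a:ℝ)/b) + βc - round ((h : ℝ) * ((a:ℝ)/b) + βc)| < ε)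
    (H' : |(h' : ℝ) * ((a:ℝ)/b) + βc - round ((h' : ℝ) * ((a:ℝ)/b) + βc)| < ε) :
    (b:ℤ) ∣ ((h:ℤ) - h') * a := by
  have hbR : (0:ℝ) < b := by exact_mod_cast hb
  set g : ℕ := Int.gcd a b with hgdef
  have hgb : (g:ℤ) ∣ (b:ℤ) := Int.gcd_dvd_right _ _
  have hga : (g:ℤ) ∣ a := Int.gcd_dvd_left _ _
  set R : ℤ := round ((h : ℝ) * ((a:ℝ)/b) + βc) with hR
  set R' : ℤ := round ((h' : ℝ) * ((a:ℝ)/b) + βc) with hR'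
  set T : ℤ := ((h:ℤ) - h') * a - (b:ℤ) * (R - R') with hT
  have hTr : (T:ℝ) = b * (((h : ℝ) * ((a:ℝ)/b) + βc - R) - ((h' : ℝ) * ((a:ℝ)/b) + βc - R')) := by
    rw [hT]
    push_cast
    field_simp
    ring
  have hTabs : |(T:ℝ)| < 2*ε*b := by
    rw [hTr, abs_mul, abs_of_pos hbR]
    have habs : |(((h : ℝ) * ((a:ℝ)/b) + βc - R) - ((h' : ℝ) * ((a:ℝ)/b) + βc - R'))| < 2*ε := by
      calc |(((h : ℝ) * ((a:ℝ)/b) + βc - R) - ((h' : ℝ) * ((a:ℝ)/b) + βc - R'))|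
          ≤ |(h : ℝ) * ((a:ℝ)/b) + βc - R| + |(h' : ℝ) * ((a:ℝ)/b) + βc - R'| := abs_sub _ _
        _ < 2*ε := by linarith
    nlinarith
  have hdvd : (g:ℤ) ∣ T :=
    dvd_sub (Dvd.dvd.mul_left hga _) (Dvd.dvd.mul_right hgb _)
  have hT0 : T = 0 := by
    by_contra h0
    have hle : (g:ℤ) ≤ |T| := Int.le_of_dvd (abs_pos.mpr h0) ((dvd_abs _ _).mpr hdvd)
    have hleR : (g:ℝ) ≤ |(T:ℝ)| := by
      rw [← Int.cast_abs]
      exact_mod_cast hle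
    linarith
  refine ⟨R - R', ?_⟩
  have h00 : ((h:ℤ) - h') * a - (b:ℤ) * (R - R') = 0 := hT0
  linear_combination h00

theorem bohr_full_orbit (a : ℤ × ℤ) (b : ℕ) (hb : 0 < b)
    (hgcd : Int.gcd (Int.gcd a.1 a.2 : ℤ) (b : ℤ) = 1) (β : ℝ × ℝ)
    (ε : ℝ) (hε : 0 < ε) (hε1 : ε < 1) :
    (({h : ℕ | h ≤ b - 1 ∧
        nint2 ((h : ℝ) * ((a.1 : ℝ) / b) + β.1, (h : ℝ) * ((a.2 : ℝ) / b) + β.2) < ε}.ncard : ℝ))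
      ≤ 8 * ε * b + 1 := by
  classical
  have hbR : (0:ℝ) < b := by exact_mod_cast hb
  have hεb : (0:ℝ) < ε * b := mul_pos hε hbR
  set P₁ : ℕ → Prop := fun h =>
    |(h : ℝ) * ((a.1:ℝ)/b) + β.1 - round ((h : ℝ) * ((a.1:ℝ)/b) + β.1)| < ε with hP₁
  set P₂ : ℕ → Prop := fun h =>
    |(h : ℝ) * ((a.2:ℝ)/b) + β.2 - round ((h : ℝ) * ((a.2:ℝ)/b) + β.2)| < ε with hP₂
  have hPdec : ∀ h, Decidable (P₁ h ∧ P₂ h) := fun h => Classical.dec _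
  set F := (Finset.range b).filter (fun h => P₁ h ∧ P₂ h) with hFdef
  have hset : {h : ℕ | h ≤ b - 1 ∧
      nint2 ((h : ℝ) * ((a.1 : ℝ) / b) + β.1, (h : ℝ) * ((a.2 : ℝ) / b) + β.2) < ε} = ↑F := by
    ext h
    simp only [hFdef, Set.mem_setOf_eq, Finset.coe_filter, Finset.mem_range, nint2, max_lt_iff,
      hP₁, hP₂]
    constructor
    · rintro ⟨h1, h2, h3⟩
      exact ⟨by omega, h2, h3⟩
    · rintro ⟨h1, h2, h3⟩
      exact ⟨by omega, h2, h3⟩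
  rw [hset, Set.ncard_coe_finset]
  rcases lt_or_ge ((Int.gcd a.1 b : ℕ) : ℝ) (2*ε*b) with h1 | h1
  · have hsub : F ⊆ (Finset.range b).filter (fun h : ℕ =>
        |(h : ℝ) * ((a.1 : ℝ) / b) + β.1 - round ((h : ℝ) * ((a.1 : ℝ) / b) + β.1)| < ε) := by
      intro h hh
      rw [hFdef, Finset.mem_filter] at hh
      rw [Finset.mem_filter]
      exact ⟨hh.1, hh.2.1⟩
    have hcount := count1 a.1 b hb β.1 ε hε
    have hc : (F.card : ℝ) ≤ 2*ε*b + (Int.gcd a.1 b : ℕ) := by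
      have := Finset.card_le_card hsub
      calc (F.card : ℝ) ≤ _ := by exact_mod_cast this
        _ ≤ _ := hcount
    linarith
  · rcases lt_or_ge ((Int.gcd a.2 b : ℕ) : ℝ) (2*ε*b) with h2 | h2
    · have hsub : F ⊆ (Finset.range b).filter (fun h : ℕ =>
          |(h : ℝ) * ((a.2 : ℝ) / b) + β.2 - round ((h : ℝ) * ((a.2 : ℝ) / b) + β.2)| < ε) := by
        intro h hh
        rw [hFdef, Finset.mem_filter] at hh
        rw [Finset.mem_filter]
        exact ⟨hh.1, hh.2.2⟩
      have hcount := count1 a.2 b hb β.2 ε hε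
      have hc : (F.card : ℝ) ≤ 2*ε*b + (Int.gcd a.2 b : ℕ) := by
        have := Finset.card_le_card hsub
        calc (F.card : ℝ) ≤ _ := by exact_mod_cast this
          _ ≤ _ := hcount
      linarith
    · have hcard : F.card ≤ 1 := by
        rw [Finset.card_le_one]
        intro h hh h' hh'
        rw [hFdef, Finset.mem_filter, Finset.mem_range] at hh hh'
        have d1 : (b:ℤ) ∣ ((h:ℤ) - h') * a.1 :=
          coord_dvd a.1 b hb β.1 ε hε h1 h h' hh.2.1 hh'.2.1
        have d2 : (b:ℤ) ∣ ((h:ℤ) - h') * a.2 :=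
          coord_dvd a.2 b hb β.2 ε hε h2 h h' hh.2.2 hh'.2.2
        have hdg : (b:ℤ) ∣ ((Int.gcd (((h:ℤ) - h') * a.1) (((h:ℤ) - h') * a.2) : ℕ) : ℤ) :=
          Int.dvd_coe_gcd d1 d2
        rw [Int.gcd_mul_left] at hdg
        have hnat : b ∣ ((h:ℤ) - h').natAbs * Int.gcd a.1 a.2 := by exact_mod_cast hdg
        have hcop : Nat.Coprime b (Int.gcd a.1 a.2) := by
          have := hgcd
          rw [Int.gcd_natCast_natCast] at this
          exact (Nat.coprime_iff_gcd_eq_one.mpr this).symm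
        have hdvd : b ∣ ((h:ℤ) - h').natAbs := hcop.dvd_of_dvd_mul_right hnat
        have habs : ((h:ℤ) - h').natAbs < b := by omega
        have h0 : ((h:ℤ) - h').natAbs = 0 := Nat.eq_zero_of_dvd_of_lt hdvd habs
        omega
      have : (F.card : ℝ) ≤ 1 := by exact_mod_cast hcard
      linarith
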